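/- Let R be a Noetherian commutative ring and S a faithfully flat Ohm-Rush R-algebra. Then S is a weak content R-algebra if and only if S is a semicontent R-algebra. -/

import Mathlib

section OhmRushDefs

variable {R S : Type*} [CommRing R] [CommRing S]

/-- The Ohm–Rush content of an element `s` of an `R`-algebra `S` (given by a ring
homomorphism `f : R →+* S`): the intersection of all ideals `I` of `R` with `s ∈ IS`. -/
def ORContent (f : R →+* S) (s : S) : Ideal R :=
  sInf {I : Ideal R | s ∈ Ideal.map f I}

/-- `S` is an Ohm–Rush `R`-algebra if every `s ∈ S` lies in the extension of its content. -/
def IsOhmRushAlgebra (f : R →+* S) : Prop :=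
  ∀ s : S, s ∈ Ideal.map f (ORContent f s)

/-- Flatness of a ring homomorphism. -/
def RingHomFlat (f : R →+* S) : Prop :=
  letI := f.toAlgebra; Module.Flat R S

/-- Faithful flatness of a ring homomorphism. -/
def RingHomFaithfullyFlat (f : R →+* S) : Prop :=
  letI := f.toAlgebra; Module.FaithfullyFlat R S

/-- Module-freeness of a ring homomorphism. -/
def RingHomFree (f : R →+* S) : Prop :=
  letI := f.toAlgebra; Module.Free R S

/-- Weak content algebra: Ohm–Rush and `√c(fg) = √(c(f)c(g))`. -/
def IsWeakContentAlgebra (f : R →+* S) : Prop :=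
  IsOhmRushAlgebra f ∧ ∀ s t : S,
    (ORContent f (s * t)).radical = (ORContent f s * ORContent f t).radical

/-- Semicontent algebra: faithfully flat Ohm–Rush, and for every multiplicative subset `W`
of `R`, if `c(s)R_W = R_W` then `c(st)R_W = c(t)R_W`. -/
def IsSemicontentAlgebra (f : R →+* S) : Prop :=
  IsOhmRushAlgebra f ∧ RingHomFaithfullyFlat f ∧
    ∀ (W : Submonoid R) (s t : S),
      Ideal.map (algebraMap R (Localization W)) (ORContent f s) = ⊤ →
      Ideal.map (algebraMap R (Localization W)) (ORContent f (s * t)) =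
        Ideal.map (algebraMap R (Localization W)) (ORContent f t)

/-- Content algebra: faithfully flat Ohm–Rush satisfying the Dedekind–Mertens type formula. -/
def IsContentAlgebra (f : R →+* S) : Prop :=
  IsOhmRushAlgebra f ∧ RingHomFaithfullyFlat f ∧
    ∀ s t : S, ∃ n : ℕ, 0 < n ∧
      ORContent f s ^ n * ORContent f t = ORContent f s ^ (n - 1) * ORContent f (s * t)

/-- A ring homomorphism satisfies INC if comparable primes of `S` with the same
contraction to `R` are equal. -/
def SatisfiesINC (f : R →+* S) : Prop :=
  ∀ Q Q' : Ideal S, Q.IsPrime → Q'.IsPrime → Q ≤ Q' →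
    Ideal.comap f Q = Ideal.comap f Q' → Q = Q'

/-- A valuation domain: a domain whose divisibility is total. -/
def IsValuationDomain (A : Type*) [CommRing A] : Prop :=
  IsDomain A ∧ ∀ a b : A, ∃ c : A, a * c = b ∨ b * c = a

/-- A Prüfer domain: a domain whose localization at every maximal ideal is a
valuation domain. -/
def IsPruferDomain (A : Type*) [CommRing A] : Prop :=
  IsDomain A ∧ ∀ (P : Ideal A) (hP : P.IsMaximal),
    haveI := hP.isPrime
    IsValuationDomain (Localization.AtPrime P)

end OhmRushDefs

section AuxProofs

variable {R S : Type*} [CommRing R] [CommRing S]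

lemma ORContent_le_of_mem {f : R →+* S} {t : S} {J : Ideal R} (h : t ∈ Ideal.map f J) :
    ORContent f t ≤ J :=
  sInf_le h

lemma mem_map_of_ORContent_le {f : R →+* S} (hor : IsOhmRushAlgebra f) {t : S} {J : Ideal R}
    (h : ORContent f t ≤ J) : t ∈ Ideal.map f J :=
  Ideal.map_mono h (hor t)

lemma ORContent_mul_le_right {f : R →+* S} (hor : IsOhmRushAlgebra f) (s t : S) :
    ORContent f (s * t) ≤ ORContent f t :=
  ORContent_le_of_mem (Ideal.mul_mem_left _ s (hor t))

/-- For a flat algebra, `f x * v ∈ JS` implies `v ∈ (J : x)S`. -/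
lemma flat_colon {f : R →+* S} (hfl : RingHomFlat f) (J : Ideal R) (x : R) {v : S}
    (h : f x * v ∈ Ideal.map f J) :
    v ∈ Ideal.map f (J.colon (Ideal.span {x})) := by
  letI := f.toAlgebra
  haveI hS : Module.Flat R S := hfl
  set K := J.colon (Ideal.span {x}) with hK
  let ψ : R →ₗ[R] R ⧸ J := J.mkQ.comp (LinearMap.lsmul R R x)
  have hker : ∀ r : R, ψ r = 0 ↔ r ∈ K := by
    intro r
    simp only [ψ, LinearMap.comp_apply, LinearMap.lsmul_apply, Submodule.mkQ_apply,
      Submodule.Quotient.mk_eq_zero, smul_eq_mul, hK, Ideal.mem_colon_span_singleton]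
    rw [mul_comm]
  have hKker : K ≤ LinearMap.ker ψ := fun r hr => (hker r).mpr hr
  let φ : (R ⧸ K) →ₗ[R] R ⧸ J := Submodule.liftQ K ψ hKker
  have hφinj : Function.Injective φ := by
    rw [← LinearMap.ker_eq_bot]
    exact Submodule.ker_liftQ_eq_bot K ψ hKker (fun r hr => (hker r).mp hr)
  have hinj : Function.Injective (LinearMap.lTensor S φ) :=
    Module.Flat.lTensor_preserves_injective_linearMap φ hφinj
  let eK := TensorProduct.tensorQuotEquivQuotSMul S K
  let eJ := TensorProduct.tensorQuotEquivQuotSMul S J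
  have hφ1 : φ (Submodule.Quotient.mk (1 : R)) = Submodule.Quotient.mk x := by
    rw [Submodule.liftQ_apply]
    show Submodule.Quotient.mk (x • (1 : R)) = _
    rw [smul_eq_mul, mul_one]
  have hcomp : eJ (LinearMap.lTensor S φ (eK.symm (Submodule.Quotient.mk v))) = 0 := by
    rw [TensorProduct.tensorQuotEquivQuotSMul_symm_mk, LinearMap.lTensor_tmul]
    have h1 : (1 : R ⧸ K) = Submodule.Quotient.mk (1 : R) := rfl
    rw [h1, hφ1]
    have h2 : (Submodule.Quotient.mk x : R ⧸ J) = Ideal.Quotient.mk J x := rfl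
    rw [h2, TensorProduct.tensorQuotEquivQuotSMul_tmul_mk]
    rw [Submodule.Quotient.mk_eq_zero]
    rw [Ideal.smul_top_eq_map]
    have : x • v = f x * v := Algebra.smul_def x v
    rw [this]
    exact h
  have h3 : eK.symm (Submodule.Quotient.mk v) = 0 := by
    apply hinj
    rw [map_zero]
    exact (LinearEquiv.map_eq_zero_iff eJ).mp hcomp
  have h4 : (Submodule.Quotient.mk v : S ⧸ (K • (⊤ : Submodule R S))) = 0 := by
    have := congrArg eK h3
    rwa [LinearEquiv.apply_symm_apply, map_zero] at this
  rw [Submodule.Quotient.mk_eq_zero, Ideal.smul_top_eq_map] at h4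
  exact h4

lemma map_ne_top_of_ff {f : R →+* S} (hff : RingHomFaithfullyFlat f) {J : Ideal R} (hJ : J ≠ ⊤) :
    Ideal.map f J ≠ ⊤ := by
  letI := f.toAlgebra
  haveI hS : Module.FaithfullyFlat R S := hff
  intro htop
  refine ((Module.FaithfullyFlat.iff_flat_and_proper_ideal R S).mp hS).2 J hJ ?_
  rw [Ideal.smul_top_eq_map]
  have h1 : Ideal.map (algebraMap R S) J = ⊤ := htop
  rw [h1]
  rfl

lemma map_prime_of_weakContent {f : R →+* S} (hff : RingHomFaithfullyFlat f)
    (hor : IsOhmRushAlgebra f)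
    (hwc : ∀ s t : S, (ORContent f (s * t)).radical = (ORContent f s * ORContent f t).radical)
    {p : Ideal R} (hp : p.IsPrime) : (Ideal.map f p).IsPrime := by
  constructor
  · exact map_ne_top_of_ff hff hp.ne_top
  · intro x y hxy
    have h1 : (ORContent f (x * y)).radical ≤ p := hp.radical_le_iff.mpr (sInf_le hxy)
    rw [hwc x y] at h1
    have h2 : ORContent f x * ORContent f y ≤ p := le_trans Ideal.le_radical h1
    rcases hp.mul_le.mp h2 with h | h
    · exact Or.inl (mem_map_of_ORContent_le hor h)
    · exact Or.inr (mem_map_of_ORContent_le hor h)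

end AuxProofs

/-- Over a Noetherian base ring, a faithfully flat Ohm–Rush algebra is
weak content iff it is semicontent. -/
theorem weakContent_iff_semicontent_of_noetherian {R S : Type*} [CommRing R] [CommRing S]
    [IsNoetherianRing R] (f : R →+* S)
    (hff : RingHomFaithfullyFlat f) (hor : IsOhmRushAlgebra f) :
    IsWeakContentAlgebra f ↔ IsSemicontentAlgebra f := by
  have hfl : RingHomFlat f := by
    unfold RingHomFlat
    unfold RingHomFaithfullyFlat at hff
    exact hff.toFlat
  constructor
  · rintro ⟨-, hwc⟩
    refine ⟨hor, hff, ?_⟩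
    intro W s t hcs
    -- a unit-content element of `ORContent f s`
    have h1 : (1 : Localization W) ∈ Ideal.map (algebraMap R (Localization W)) (ORContent f s) :=
      hcs ▸ Submodule.mem_top
    obtain ⟨⟨a, w0⟩, ha⟩ := (IsLocalization.mem_map_algebraMap_iff W (Localization W)).mp h1
    have haunit : IsUnit (algebraMap R (Localization W) (a : R)) := by
      have h2 : algebraMap R (Localization W) (w0 : R) =
          algebraMap R (Localization W) (a : R) := by simpa using ha
      exact h2 ▸ IsLocalization.map_units (Localization W) w0
    -- saturation facts
    have hsat_gen : ∀ (K : Ideal R) (w' x' : R), IsUnit (algebraMap R (Localization W) w') →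
        w' * x' ∈ (Ideal.map (algebraMap R (Localization W)) K).comap
          (algebraMap R (Localization W)) →
        x' ∈ (Ideal.map (algebraMap R (Localization W)) K).comap
          (algebraMap R (Localization W)) := by
      intro K w' x' hw' hmem
      rw [Ideal.mem_comap] at hmem ⊢
      rw [map_mul] at hmem
      have h2 := Ideal.mul_mem_left _ ((hw'.unit⁻¹ : Units (Localization W)) : Localization W) hmem
      rwa [← mul_assoc, IsUnit.val_inv_mul, one_mul] at h2
    have hmem_sat : ∀ (K : Ideal R) (y : R),
        y ∈ (Ideal.map (algebraMap R (Localization W)) K).comap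
          (algebraMap R (Localization W)) →
        ∃ w', IsUnit (algebraMap R (Localization W) w') ∧ w' * y ∈ K := by
      intro K y hy
      rw [Ideal.mem_comap] at hy
      obtain ⟨⟨k, w1⟩, hk⟩ := (IsLocalization.mem_map_algebraMap_iff W (Localization W)).mp hy
      have h0 : algebraMap R (Localization W) (y * (w1 : R) - (k : R)) = 0 := by
        rw [map_sub, map_mul, hk, sub_self]
      obtain ⟨c, hc⟩ := (IsLocalization.map_eq_zero_iff W (Localization W) _).mp h0
      refine ⟨(c : R) * (w1 : R), ?_, ?_⟩
      · have := IsLocalization.map_units (Localization W) (c * w1)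
        simpa using this
      · have h5 : (c : R) * (w1 : R) * y = (c : R) * (k : R) := by linear_combination hc
        rw [h5]
        exact K.mul_mem_left _ k.2
    set I : Ideal R := (Ideal.map (algebraMap R (Localization W))
      (ORContent f (s * t))).comap (algebraMap R (Localization W)) with hIdef
    have hIle : ORContent f (s * t) ≤ I := Ideal.le_comap_map
    have wf : WellFounded ((· > ·) : Ideal R → Ideal R → Prop) := IsWellFounded.wf
    have step : ∀ J : Ideal R,
        (∀ J' : Ideal R, J < J' →
          ((∀ w' x' : R, IsUnit (algebraMap R (Localization W) w') → w' * x' ∈ J' → x' ∈ J') →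
            I ≤ J' → t ∈ Ideal.map f J')) →
        ((∀ w' x' : R, IsUnit (algebraMap R (Localization W) w') → w' * x' ∈ J → x' ∈ J) →
          I ≤ J → t ∈ Ideal.map f J) := by
      intro J IH hsatJ hIJ
      by_cases hJtop : J = ⊤
      · rw [hJtop, Ideal.map_top]; exact Submodule.mem_top
      haveI : Nontrivial (R ⧸ J) :=
        Ideal.Quotient.nontrivial_iff.mpr hJtop
      obtain ⟨p, hp0⟩ := associatedPrimes.nonempty R (R ⧸ J)
      obtain ⟨hpPrime, x0, hp⟩ := isAssociatedPrime_iff.mp hp0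
      obtain ⟨x, rfl⟩ := Submodule.Quotient.mk_surjective _ x0
      have hpx : ∀ r : R, r ∈ p ↔ r * x ∈ J := by
        intro r
        rw [hp, Submodule.mem_colon_singleton, Submodule.mem_bot, ← Submodule.Quotient.mk_smul,
          Submodule.Quotient.mk_eq_zero, smul_eq_mul]
      have hxJ : x ∉ J := fun hx =>
        hpPrime.ne_top ((Ideal.eq_top_iff_one p).mpr ((hpx 1).mpr (by rwa [one_mul])))
      have hpu : ∀ w' : R, IsUnit (algebraMap R (Localization W) w') → w' ∉ p :=
        fun w' hw' hmem => hxJ (hsatJ w' x hw' ((hpx w').mp hmem))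
      -- the saturated enlargement of J
      set J' : Ideal R := (Ideal.map (algebraMap R (Localization W))
        (J ⊔ Ideal.span {x})).comap (algebraMap R (Localization W)) with hJ'def
      have hJleJ' : J ≤ J' := le_trans le_sup_left Ideal.le_comap_map
      have hxJ' : x ∈ J' :=
        Ideal.le_comap_map (Ideal.mem_sup_right (Ideal.subset_span (Set.mem_singleton x)))
      have hJltJ' : J < J' := lt_of_le_of_ne hJleJ' (fun h => hxJ (h ▸ hxJ'))
      have htJ' : t ∈ Ideal.map f J' :=
        IH J' hJltJ' (hsat_gen _) (le_trans hIJ hJleJ')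
      have hctJ' : ORContent f t ≤ J' := sInf_le htJ'
      obtain ⟨G, hG⟩ := IsNoetherian.noetherian (ORContent f t)
      have hGmem : ∀ y ∈ G, ∃ w', IsUnit (algebraMap R (Localization W) w') ∧
          w' * y ∈ J ⊔ Ideal.span {x} := by
        intro y hy
        exact hmem_sat _ y (hctJ' (hG ▸ Ideal.subset_span hy))
      have hcomb : ∀ (G' : Finset R),
          (∀ y ∈ G', ∃ w', IsUnit (algebraMap R (Localization W) w') ∧
            w' * y ∈ J ⊔ Ideal.span {x}) →
          ∃ w', IsUnit (algebraMap R (Localization W) w') ∧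
            ∀ y ∈ G', w' * y ∈ J ⊔ Ideal.span {x} := by
        classical
        intro G'
        refine Finset.induction_on G' ?_ ?_
        · intro _
          exact ⟨1, by simpa using isUnit_one, by simp⟩
        · intro b G'' hbnot IH' hmem
          obtain ⟨w1, hw1, hb1⟩ := hmem b (Finset.mem_insert_self b G'')
          obtain ⟨w2, hw2, hb2⟩ := IH' (fun y hy => hmem y (Finset.mem_insert_of_mem hy))
          refine ⟨w1 * w2, by rw [map_mul]; exact hw1.mul hw2, ?_⟩
          intro y hy
          rcases Finset.mem_insert.mp hy with rfl | hy'
          · have hcalc : w1 * w2 * y = w2 * (w1 * y) := by ring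
            rw [hcalc]; exact Ideal.mul_mem_left _ _ hb1
          · have hcalc : w1 * w2 * y = w1 * (w2 * y) := by ring
            rw [hcalc]; exact Ideal.mul_mem_left _ _ (hb2 y hy')
      obtain ⟨w, hwu, hwmem⟩ := hcomb G hGmem
      have hwct : ORContent f t ≤ (J ⊔ Ideal.span {x}).colon (Ideal.span {w}) := by
        rw [← hG]
        refine Submodule.span_le.mpr ?_
        intro y hy
        rw [SetLike.mem_coe, Ideal.mem_colon_span_singleton, mul_comm]
        exact hwmem y hy
      have hwt : f w * t ∈ Ideal.map f (J ⊔ Ideal.span {x}) := by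
        have h1' : t ∈ Ideal.map f ((J ⊔ Ideal.span {x}).colon (Ideal.span {w})) :=
          mem_map_of_ORContent_le hor hwct
        have h2' : f w * t ∈ Ideal.map f (Ideal.span {w}) *
            Ideal.map f ((J ⊔ Ideal.span {x}).colon (Ideal.span {w})) :=
          Ideal.mul_mem_mul (Ideal.mem_map_of_mem f (Ideal.subset_span rfl)) h1'
        rw [← Ideal.map_mul] at h2'
        refine Ideal.map_mono ?_ h2'
        rw [Ideal.mul_le]
        intro r hr c hc
        rw [Ideal.mem_span_singleton'] at hr
        obtain ⟨b, rfl⟩ := hr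
        rw [Ideal.mem_colon_span_singleton] at hc
        have hcalc : b * w * c = b * (c * w) := by ring
        rw [hcalc]
        exact Ideal.mul_mem_left _ _ hc
      rw [Ideal.map_sup] at hwt
      obtain ⟨u, hu, z, hz, huz⟩ := Submodule.mem_sup.mp hwt
      rw [Ideal.map_span, Set.image_singleton, Ideal.mem_span_singleton'] at hz
      obtain ⟨v, hv⟩ := hz
      have hstJ : s * t ∈ Ideal.map f J :=
        mem_map_of_ORContent_le hor (le_trans hIle hIJ)
      have hkey : f x * (s * v) ∈ Ideal.map f J := by
        have h3' : f w * (s * t) ∈ Ideal.map f J := Ideal.mul_mem_left _ _ hstJ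
        have h4' : s * u ∈ Ideal.map f J := Ideal.mul_mem_left _ _ hu
        have h5' : f x * (s * v) = f w * (s * t) - s * u := by
          have huz' : f w * t = u + z := huz.symm
          calc f x * (s * v) = s * (v * f x) := by ring
            _ = s * z := by rw [hv]
            _ = s * (u + z) - s * u := by ring
            _ = s * (f w * t) - s * u := by rw [huz']
            _ = f w * (s * t) - s * u := by ring
        rw [h5']
        exact Ideal.sub_mem _ h3' h4'
      have hsv : s * v ∈ Ideal.map f (J.colon (Ideal.span {x})) := flat_colon hfl J x hkey
      have hcolon_p : J.colon (Ideal.span {x}) = p := by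
        ext r
        rw [Ideal.mem_colon_span_singleton, hpx]
      rw [hcolon_p] at hsv
      have hpS : (Ideal.map f p).IsPrime := map_prime_of_weakContent hff hor hwc hpPrime
      have hsp : s ∉ Ideal.map f p := fun hs => hpu (a : R) haunit (ORContent_le_of_mem hs a.2)
      have hv' : v ∈ Ideal.map f p := (hpS.mem_or_mem hsv).resolve_left hsp
      have hzJ : z ∈ Ideal.map f J := by
        rw [← hv]
        have h6 : v * f x ∈ Ideal.map f p * Ideal.map f (Ideal.span {x}) :=
          Ideal.mul_mem_mul hv' (Ideal.mem_map_of_mem f (Ideal.subset_span rfl))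
        rw [← Ideal.map_mul] at h6
        refine Ideal.map_mono ?_ h6
        rw [Ideal.mul_le]
        intro r hr c hc
        rw [Ideal.mem_span_singleton'] at hc
        obtain ⟨b, rfl⟩ := hc
        have hcalc : r * (b * x) = b * (r * x) := by ring
        rw [hcalc]
        exact Ideal.mul_mem_left _ _ ((hpx r).mp hr)
      have hwtJ : f w * t ∈ Ideal.map f J := by
        rw [← huz]
        exact Ideal.add_mem _ hu hzJ
      have ht' : t ∈ Ideal.map f (J.colon (Ideal.span {w})) := flat_colon hfl J w hwtJ
      have hcw : J.colon (Ideal.span {w}) = J := by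
        apply le_antisymm
        · intro r hr
          rw [Ideal.mem_colon_span_singleton] at hr
          exact hsatJ w r hwu (by rwa [mul_comm])
        · intro r hr
          rw [Ideal.mem_colon_span_singleton]
          exact Ideal.mul_mem_right _ _ hr
      rwa [hcw] at ht'
    have key : ∀ J : Ideal R,
        (∀ w' x' : R, IsUnit (algebraMap R (Localization W) w') → w' * x' ∈ J → x' ∈ J) →
        I ≤ J → t ∈ Ideal.map f J :=
      fun J₀ => WellFounded.induction wf J₀ step
    have ht : t ∈ Ideal.map f I := key I (hsat_gen _) le_rfl
    have hct : ORContent f t ≤ I := sInf_le ht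
    apply le_antisymm
    · exact Ideal.map_mono (ORContent_mul_le_right hor s t)
    · calc Ideal.map (algebraMap R (Localization W)) (ORContent f t)
          ≤ Ideal.map (algebraMap R (Localization W)) I := Ideal.map_mono hct
        _ ≤ Ideal.map (algebraMap R (Localization W)) (ORContent f (s * t)) :=
            Ideal.map_comap_le
  · rintro ⟨-, -, hsc⟩
    refine ⟨hor, ?_⟩
    intro s t
    apply le_antisymm
    · refine Ideal.radical_mono ?_
      apply sInf_le
      show s * t ∈ Ideal.map f (ORContent f s * ORContent f t)
      rw [Ideal.map_mul]
      exact Ideal.mul_mem_mul (hor s) (hor t)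
    · have hmain : ORContent f s * ORContent f t ≤ (ORContent f (s * t)).radical := by
        rw [Ideal.radical_eq_sInf]
        refine le_sInf ?_
        rintro P ⟨hle, hP⟩
        haveI := hP
        by_cases hs : ORContent f s ≤ P
        · exact le_trans Ideal.mul_le_left hs
        by_cases ht : ORContent f t ≤ P
        · exact le_trans Ideal.mul_le_right ht
        obtain ⟨a, hacs, haP⟩ := SetLike.not_le_iff_exists.mp hs
        obtain ⟨b, hbct, hbP⟩ := SetLike.not_le_iff_exists.mp ht
        exfalso
        have hmap : Ideal.map (algebraMap R (Localization P.primeCompl)) (ORContent f s) = ⊤ :=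
          Ideal.eq_top_of_isUnit_mem _ (Ideal.mem_map_of_mem _ hacs)
            (IsLocalization.map_units (Localization P.primeCompl) (⟨a, haP⟩ : P.primeCompl))
        have h1 := hsc P.primeCompl s t hmap
        have h2 : Ideal.map (algebraMap R (Localization P.primeCompl)) (ORContent f t) = ⊤ :=
          Ideal.eq_top_of_isUnit_mem _ (Ideal.mem_map_of_mem _ hbct)
            (IsLocalization.map_units (Localization P.primeCompl) (⟨b, hbP⟩ : P.primeCompl))
        rw [h2] at h1
        have h3 : (1 : Localization P.primeCompl) ∈ Ideal.map (algebraMap R (Localization P.primeCompl)) P :=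
          Ideal.map_mono hle (h1 ▸ Submodule.mem_top)
        obtain ⟨⟨y, w⟩, hyw⟩ := (IsLocalization.mem_map_algebraMap_iff P.primeCompl (Localization P.primeCompl)).mp h3
        have h4 : algebraMap R (Localization P.primeCompl) ((w : R) - (y : R)) = 0 := by
          rw [map_sub, ← hyw, one_mul, sub_self]
        obtain ⟨c, hc⟩ := (IsLocalization.map_eq_zero_iff P.primeCompl (Localization P.primeCompl) _).mp h4
        have h5 : (c : R) * (w : R) ∈ P := by
          have hcy : (c : R) * (w : R) = (c : R) * (y : R) := by linear_combination hc
          rw [hcy]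
          exact P.mul_mem_left _ y.2
        have h6 : (c : R) * (w : R) ∈ P.primeCompl := Submonoid.mul_mem _ c.2 w.2
        exact h6 h5
      exact le_trans (Ideal.radical_mono hmain) (Ideal.radical_idem _).le
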